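/- Let A be a Banach algebra, B a C*-algebra, θ : A → B a continuous homomorphism, and α : A → A an antilinear (conjugate-linear) contraction. If ‖θ(f) + θ(α(f))*‖ ≤ 2‖f‖ for all f ∈ A, then ‖θ‖ ≤ 1 + √2. -/
import Mathlib


open scoped ComplexConjugate

/-- Theorem (basic bound): if `A` is a complex Banach algebra, `B` a C*-algebra,
`θ : A → B` a continuous algebra homomorphism, `α : A → A` a conjugate-linear
contraction, and `‖θ f + (θ (α f))*‖ ≤ 2‖f‖` for all `f`, then `‖θ‖ ≤ 1 + √2`. -/
theorem stmt_0 {A B : Type*}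
    [NormedRing A] [NormedAlgebra ℂ A] [CompleteSpace A]
    [NormedRing B] [StarRing B] [CStarRing B] [NormedAlgebra ℂ B]
    [StarModule ℂ B] [CompleteSpace B]
    (θ : A →ₐ[ℂ] B) (hθ : Continuous θ)
    (α : A →ₛₗ[starRingEnd ℂ] A) (hα : ∀ f, ‖α f‖ ≤ ‖f‖)
    (h : ∀ f : A, ‖θ f + star (θ (α f))‖ ≤ 2 * ‖f‖) :
    ∀ f : A, ‖θ f‖ ≤ (1 + Real.sqrt 2) * ‖f‖ := by
  set θ' : A →L[ℂ] B := ⟨θ.toLinearMap, hθ⟩ with hθ'def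
  set K := ‖θ'‖ with hKdef
  have hKnn : 0 ≤ K := norm_nonneg _
  have hb : ∀ f : A, ‖θ f‖ ≤ K * ‖f‖ := fun f => θ'.le_opNorm f
  -- the cube inequality
  have cube : ∀ f : A, ‖θ f‖ ^ 3 ≤ (2 * K ^ 2 + K) * ‖f‖ ^ 3 := by
    intro f
    set x := θ f with hx
    set a := θ (α f) with ha
    have h1 : ‖star x + a‖ ≤ 2 * ‖f‖ := by
      calc ‖star x + a‖ = ‖star (x + star a)‖ := by rw [star_add, star_star]
        _ = ‖x + star a‖ := norm_star _
        _ ≤ 2 * ‖f‖ := h f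
    -- ‖x‖^4 ≤ ‖x * star x * x‖ * ‖x‖
    have key : ‖x‖ ^ 4 ≤ ‖x * star x * x‖ * ‖x‖ := by
      have h2 : ‖x * star x‖ = ‖x‖ * ‖x‖ := CStarRing.norm_self_mul_star
      have h3 : ‖(x * star x) * (x * star x)‖ = ‖x * star x‖ * ‖x * star x‖ := by
        have := CStarRing.norm_star_mul_self (x := x * star x)
        rwa [star_mul, star_star] at this
      calc ‖x‖ ^ 4 = (‖x‖ * ‖x‖) * (‖x‖ * ‖x‖) := by ring
        _ = ‖x * star x‖ * ‖x * star x‖ := by rw [h2]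
        _ = ‖(x * star x) * (x * star x)‖ := h3.symm
        _ = ‖(x * star x * x) * star x‖ := by rw [mul_assoc (x * star x)]
        _ ≤ ‖x * star x * x‖ * ‖star x‖ := norm_mul_le _ _
        _ = ‖x * star x * x‖ * ‖x‖ := by rw [norm_star]
    -- decomposition
    have dec : x * star x * x = x * (star x + a) * x - θ (f * (α f * f)) := by
      have : θ (f * (α f * f)) = x * (a * x) := by rw [map_mul, map_mul]
      rw [this]
      noncomm_ring
    have bnd1 : ‖x * (star x + a) * x‖ ≤ ‖x‖ * (2 * ‖f‖) * ‖x‖ := by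
      calc ‖x * (star x + a) * x‖ ≤ ‖x * (star x + a)‖ * ‖x‖ := norm_mul_le _ _
        _ ≤ ‖x‖ * ‖star x + a‖ * ‖x‖ := by
            gcongr
            exact norm_mul_le _ _
        _ ≤ ‖x‖ * (2 * ‖f‖) * ‖x‖ := by gcongr
    have bnd2 : ‖θ (f * (α f * f))‖ ≤ K * ‖f‖ ^ 3 := by
      calc ‖θ (f * (α f * f))‖ ≤ K * ‖f * (α f * f)‖ := hb _
        _ ≤ K * (‖f‖ * (‖α f‖ * ‖f‖)) := by
            gcongr
            calc ‖f * (α f * f)‖ ≤ ‖f‖ * ‖α f * f‖ := norm_mul_le _ _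
              _ ≤ ‖f‖ * (‖α f‖ * ‖f‖) := by
                  gcongr
                  exact norm_mul_le _ _
        _ ≤ K * (‖f‖ * (‖f‖ * ‖f‖)) := by
            gcongr
            exact hα f
        _ = K * ‖f‖ ^ 3 := by ring
    have main : ‖x * star x * x‖ ≤ ‖x‖ * (2 * ‖f‖) * ‖x‖ + K * ‖f‖ ^ 3 := by
      calc ‖x * star x * x‖ = ‖x * (star x + a) * x - θ (f * (α f * f))‖ := by rw [dec]
        _ ≤ ‖x * (star x + a) * x‖ + ‖θ (f * (α f * f))‖ := norm_sub_le _ _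
        _ ≤ ‖x‖ * (2 * ‖f‖) * ‖x‖ + K * ‖f‖ ^ 3 := add_le_add bnd1 bnd2
    -- ‖x‖^3 ≤ 2‖f‖‖x‖² + K‖f‖³
    have cube' : ‖x‖ ^ 3 ≤ 2 * ‖f‖ * ‖x‖ ^ 2 + K * ‖f‖ ^ 3 := by
      rcases eq_or_lt_of_le (norm_nonneg x) with hx0 | hx0
      · have : ‖x‖ = 0 := hx0.symm
        rw [this]
        have hfnn : (0:ℝ) ≤ ‖f‖ := norm_nonneg f
        nlinarith [mul_nonneg hKnn (pow_nonneg hfnn 3)]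
      · have h4 : ‖x‖ ^ 4 ≤ (2 * ‖f‖ * ‖x‖ ^ 2 + K * ‖f‖ ^ 3) * ‖x‖ := by
          calc ‖x‖ ^ 4 ≤ ‖x * star x * x‖ * ‖x‖ := key
            _ ≤ (‖x‖ * (2 * ‖f‖) * ‖x‖ + K * ‖f‖ ^ 3) * ‖x‖ := by gcongr
            _ = (2 * ‖f‖ * ‖x‖ ^ 2 + K * ‖f‖ ^ 3) * ‖x‖ := by ring
        have h4' : ‖x‖ ^ 3 * ‖x‖ ≤ (2 * ‖f‖ * ‖x‖ ^ 2 + K * ‖f‖ ^ 3) * ‖x‖ := by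
          calc ‖x‖ ^ 3 * ‖x‖ = ‖x‖ ^ 4 := by ring
            _ ≤ _ := h4
        exact le_of_mul_le_mul_right h4' hx0
    -- now use ‖x‖ ≤ K‖f‖
    have hxK : ‖x‖ ≤ K * ‖f‖ := hb f
    have hfnn : (0:ℝ) ≤ ‖f‖ := norm_nonneg f
    have hx2 : ‖x‖ ^ 2 ≤ (K * ‖f‖) ^ 2 := pow_le_pow_left₀ (norm_nonneg x) hxK 2
    have h5 : 2 * ‖f‖ * ‖x‖ ^ 2 ≤ 2 * ‖f‖ * (K * ‖f‖) ^ 2 :=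
      mul_le_mul_of_nonneg_left hx2 (by positivity)
    calc ‖x‖ ^ 3 ≤ 2 * ‖f‖ * ‖x‖ ^ 2 + K * ‖f‖ ^ 3 := cube'
      _ ≤ 2 * ‖f‖ * (K * ‖f‖) ^ 2 + K * ‖f‖ ^ 3 := by linarith
      _ = (2 * K ^ 2 + K) * ‖f‖ ^ 3 := by ring
  -- deduce K^3 ≤ 2K^2 + K
  have hc0 : (0:ℝ) ≤ 2 * K ^ 2 + K := by positivity
  have hc3 : ((2 * K ^ 2 + K) ^ ((1:ℝ)/3)) ^ (3:ℕ) = 2 * K ^ 2 + K := by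
    rw [← Real.rpow_natCast ((2 * K ^ 2 + K) ^ ((1:ℝ)/3)) 3, ← Real.rpow_mul hc0]
    norm_num
  have hKle : K ≤ (2 * K ^ 2 + K) ^ ((1:ℝ)/3) := by
    refine θ'.opNorm_le_bound (Real.rpow_nonneg hc0 _) ?_
    intro f
    refine le_of_pow_le_pow_left₀ (n := 3) (by norm_num) (by positivity) ?_
    calc ‖θ' f‖ ^ 3 = ‖θ f‖ ^ 3 := rfl
      _ ≤ (2 * K ^ 2 + K) * ‖f‖ ^ 3 := cube f
      _ = ((2 * K ^ 2 + K) ^ ((1:ℝ)/3) * ‖f‖) ^ 3 := by rw [mul_pow, hc3]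
  have hK3 : K ^ 3 ≤ 2 * K ^ 2 + K := by
    calc K ^ 3 ≤ ((2 * K ^ 2 + K) ^ ((1:ℝ)/3)) ^ 3 := pow_le_pow_left₀ hKnn hKle 3
      _ = 2 * K ^ 2 + K := hc3
  -- conclude K ≤ 1 + √2
  have hs2 : Real.sqrt 2 ^ 2 = 2 := Real.sq_sqrt (by norm_num)
  have hsnn : (0:ℝ) ≤ Real.sqrt 2 := Real.sqrt_nonneg 2
  have hKfin : K ≤ 1 + Real.sqrt 2 := by
    by_contra hc
    push_neg at hc
    have h1 : 0 < K := lt_of_le_of_lt (by positivity) hc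
    have h2 : Real.sqrt 2 < K - 1 := by linarith
    have h3 : 2 < (K - 1) ^ 2 := by nlinarith
    have h4 : 0 < K * ((K - 1) ^ 2 - 2) := mul_pos h1 (by linarith)
    have h5 : K * ((K - 1) ^ 2 - 2) = K ^ 3 - 2 * K ^ 2 - K := by ring
    linarith
  intro f
  exact le_trans (hb f) (mul_le_mul_of_nonneg_right hKfin (norm_nonneg f))
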